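/- For any μ > 0 and n ≥ 1, sup over clustered configurations x ∈ C (of n consecutive integers in ℤ) of the sum over all strictly increasing n-tuples v ∈ ℤ^n of exp(−μ d(x,v)) is at most (1 − e^{−μ})^{-1} · ∏_{k=1}^∞ (1 − e^{−kμ})^{-2}, where d is the ℓ¹-distance. In particular the bound is uniform in n. -/

import Mathlib

open scoped BigOperators ENNReal

/-- Configurations of `n` hard-core particles on ℤ. -/
abbrev ConfigZ (n : ℕ) : Type := {x : Fin n → ℤ // StrictMono x}

/-- The ℓ¹-distance between configurations. -/
noncomputable def ell1Z {n : ℕ} (x y : ConfigZ n) : ℝ :=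
  ∑ i, |((x.1 i - y.1 i : ℤ) : ℝ)|

/-- A configuration is clustered iff it consists of consecutive sites. -/
def IsClusteredZ {n : ℕ} (x : ConfigZ n) : Prop :=
  ∀ i j : Fin n, x.1 j - x.1 i = (j : ℤ) - (i : ℤ)

namespace Stmt13Aux

variable {n : ℕ}

abbrev MonoN (n : ℕ) := {b : Fin n → ℕ // Monotone b}
abbrev AntiN (n : ℕ) := {a : Fin n → ℕ // Antitone a}
abbrev MonoZ (n : ℕ) := {y : Fin n → ℤ // Monotone y}

lemma sm_le {v : Fin n → ℤ} (h : StrictMono v) :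
    ∀ (k : ℕ) (i j : Fin n), j.val = i.val + k → v i + k ≤ v j := by
  intro k
  induction k with
  | zero =>
    intro i j hij
    have : i = j := Fin.ext (by omega)
    simp [this]
  | succ k ih =>
    intro i j hij
    have hj' : i.val + k < n := by omega
    have h1 := ih i ⟨i.val + k, hj'⟩ rfl
    have h2 : v ⟨i.val + k, hj'⟩ < v j := h (by simp [Fin.lt_def]; omega)
    push_cast at h1 ⊢
    omega

noncomputable def configEquiv (x : ConfigZ n) (hx : IsClusteredZ x) :
    ConfigZ n ≃ MonoZ n where
  toFun v := ⟨fun i => v.1 i - x.1 i, by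
    intro i j hij
    have h1 := sm_le v.2 (j.val - i.val) i j (by omega)
    have h2 := hx i j
    have h3 : ((j.val - i.val : ℕ) : ℤ) = (j : ℤ) - (i : ℤ) := by
      have := hij
      simp only [Fin.le_def] at this
      push_cast [Int.ofNat_sub this]
      ring
    dsimp only
    omega⟩
  invFun y := ⟨fun i => y.1 i + x.1 i, by
    intro i j hij
    have h1 : y.1 i ≤ y.1 j := y.2 hij.le
    have h2 := hx i j
    have h3 : (i : ℤ) < (j : ℤ) := by
      simp only [Fin.lt_def] at hij
      exact_mod_cast hij
    dsimp only
    omega⟩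
  left_inv v := by ext i; simp
  right_inv y := by ext i; simp

def antiEquiv (n : ℕ) : AntiN n ≃ MonoN n where
  toFun a := ⟨fun i => a.1 i.rev, fun i j hij => a.2 (Fin.rev_le_rev.mpr hij)⟩
  invFun b := ⟨fun i => b.1 i.rev, fun i j hij => b.2 (Fin.rev_le_rev.mpr hij)⟩
  left_inv a := by ext i; simp
  right_inv b := by ext i; simp

def monoSuccEquiv (n : ℕ) : MonoN (n + 1) ≃ ℕ × MonoN n where
  toFun b := (b.1 0, ⟨fun i => b.1 i.succ - b.1 0,
    fun i j hij => Nat.sub_le_sub_right (b.2 (Fin.succ_le_succ_iff.mpr hij)) _⟩)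
  invFun p := ⟨Fin.cases p.1 (fun i => p.2.1 i + p.1), by
    intro i j hij
    induction i using Fin.cases with
    | zero =>
      induction j using Fin.cases with
      | zero => simp
      | succ j => simp [Nat.le_add_left]
    | succ i =>
      induction j using Fin.cases with
      | zero => exact absurd (Fin.le_zero_iff.mp hij) (Fin.succ_ne_zero i)
      | succ j =>
        simp only [Fin.cases_succ]
        exact Nat.add_le_add_right (p.2.2 (Fin.succ_le_succ_iff.mp hij)) _⟩
  left_inv b := by
    ext i
    induction i using Fin.cases with
    | zero => simp
    | succ i => simpa using Nat.sub_add_cancel (b.2 (Fin.zero_le _))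
  right_inv p := by
    refine Prod.ext (by simp) ?_
    ext i
    simp

lemma tsum_monoN (Q : ℝ≥0∞) :
    ∀ n, ∑' b : MonoN n, ∏ i, Q ^ (b.1 i)
      = ∏ k ∈ Finset.range n, (1 - Q ^ (k + 1))⁻¹ := by
  intro n
  induction n with
  | zero =>
    have hu : Unique (MonoN 0) :=
      ⟨⟨⟨Fin.elim0, fun i => i.elim0⟩⟩, fun a => Subtype.ext (funext fun i => i.elim0)⟩
    rw [tsum_eq_single (hu.default) (fun b hb => absurd (hu.uniq b) hb)]
    simp
  | succ n ih =>
    rw [← ((monoSuccEquiv n).symm.tsum_eq (fun b : MonoN (n+1) => ∏ i, Q ^ (b.1 i)))]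
    have key : ∀ p : ℕ × MonoN n,
        (∏ i, Q ^ (((monoSuccEquiv n).symm p).1 i))
          = (Q ^ (n+1)) ^ p.1 * ∏ i, Q ^ (p.2.1 i) := by
      intro p
      rw [Fin.prod_univ_succ]
      simp only [monoSuccEquiv, Equiv.coe_fn_symm_mk, Fin.cases_zero, Fin.cases_succ]
      rw [show (∏ i : Fin n, Q ^ (p.2.1 i + p.1))
            = ∏ i : Fin n, (Q ^ (p.2.1 i) * Q ^ p.1) by
          exact Finset.prod_congr rfl fun i _ => pow_add Q _ _]
      rw [Finset.prod_mul_distrib, Finset.prod_const]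
      simp only [Finset.card_univ, Fintype.card_fin]
      rw [← pow_mul, ← pow_mul]
      ring
    simp_rw [key]
    rw [ENNReal.tsum_prod']
    simp_rw [ENNReal.tsum_mul_left]
    rw [ENNReal.tsum_mul_right, ENNReal.tsum_geometric, ih, Finset.prod_range_succ]
    ring

end Stmt13Aux

namespace Stmt13Aux

variable {n : ℕ}

lemma ofReal_weight (μ : ℝ) (x v : ConfigZ n) :
    ENNReal.ofReal (Real.exp (-μ * ell1Z x v))
      = ∏ i, (ENNReal.ofReal (Real.exp (-μ))) ^ ((v.1 i - x.1 i).natAbs) := by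
  rw [ell1Z, Finset.mul_sum, Real.exp_sum,
    ENNReal.ofReal_prod_of_nonneg (fun i _ => (Real.exp_pos _).le)]
  refine Finset.prod_congr rfl fun i _ => ?_
  have h0 : |(x.1 i - v.1 i : ℤ)| = ((v.1 i - x.1 i).natAbs : ℤ) := by
    rw [Int.abs_eq_natAbs]; omega
  have h1 : |((x.1 i - v.1 i : ℤ) : ℝ)| = (((v.1 i - x.1 i).natAbs) : ℝ) := by
    rw [Nat.cast_natAbs]
    push_cast
    rw [abs_sub_comm]
  rw [h1, show -μ * (((v.1 i - x.1 i).natAbs) : ℝ)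
        = (((v.1 i - x.1 i).natAbs : ℕ) : ℝ) * (-μ) by push_cast; ring,
    Real.exp_nat_mul, ENNReal.ofReal_pow (Real.exp_nonneg _)]

def toPair (y : MonoZ n) : AntiN n × MonoN n :=
  (⟨fun i => (-(y.1 i)).toNat, fun i j hij => by
      have := y.2 hij; dsimp only; omega⟩,
   ⟨fun i => (y.1 i).toNat, fun i j hij => by
      have := y.2 hij; dsimp only; omega⟩)

lemma toPair_inj : Function.Injective (toPair (n := n)) := by
  intro y y' h
  have h1 := congrArg (fun p => p.1.1) h
  have h2 := congrArg (fun p => p.2.1) h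
  ext i
  have e1 := congrFun h1 i
  have e2 := congrFun h2 i
  dsimp [toPair] at e1 e2
  omega

lemma weight_eq (Q : ℝ≥0∞) (y : MonoZ n) :
    (∏ i, Q ^ ((y.1 i).natAbs))
      = (∏ i, Q ^ ((toPair y).1.1 i)) * (∏ i, Q ^ ((toPair y).2.1 i)) := by
  rw [← Finset.prod_mul_distrib]
  refine Finset.prod_congr rfl fun i _ => ?_
  rw [← pow_add]
  congr 1
  dsimp [toPair]
  omega

lemma ennreal_bound (μ : ℝ) (n : ℕ) (x : ConfigZ n) (hx : IsClusteredZ x) :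
    ∑' v : ConfigZ n, ENNReal.ofReal (Real.exp (-μ * ell1Z x v))
      ≤ (∏ k ∈ Finset.range n, (1 - (ENNReal.ofReal (Real.exp (-μ))) ^ (k + 1))⁻¹) ^ 2 := by
  set Q := ENNReal.ofReal (Real.exp (-μ)) with hQ
  calc ∑' v : ConfigZ n, ENNReal.ofReal (Real.exp (-μ * ell1Z x v))
      = ∑' v : ConfigZ n, ∏ i, Q ^ ((v.1 i - x.1 i).natAbs) :=
        tsum_congr fun v => ofReal_weight μ x v
    _ = ∑' y : MonoZ n, ∏ i, Q ^ ((y.1 i).natAbs) :=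
        Equiv.tsum_eq (configEquiv x hx) (fun y => ∏ i, Q ^ ((y.1 i).natAbs))
    _ ≤ ∑' p : AntiN n × MonoN n, (∏ i, Q ^ (p.1.1 i)) * (∏ i, Q ^ (p.2.1 i)) := by
        refine Summable.tsum_le_tsum_of_inj toPair toPair_inj (fun _ _ => zero_le)
          (fun y => le_of_eq (weight_eq Q y)) ENNReal.summable ENNReal.summable
    _ = (∑' a : AntiN n, ∏ i, Q ^ (a.1 i)) * (∑' b : MonoN n, ∏ i, Q ^ (b.1 i)) := by
        rw [ENNReal.tsum_prod']
        simp_rw [ENNReal.tsum_mul_left]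
        rw [ENNReal.tsum_mul_right]
    _ = (∑' b : MonoN n, ∏ i, Q ^ (b.1 i)) ^ 2 := by
        rw [sq]
        congr 1
        calc ∑' a : AntiN n, ∏ i, Q ^ (a.1 i)
            = ∑' a : AntiN n, ∏ i, Q ^ (a.1 (Fin.rev i)) :=
              tsum_congr fun a => (Equiv.prod_comp Fin.revPerm (fun i => Q ^ (a.1 i))).symm
          _ = ∑' b : MonoN n, ∏ i, Q ^ (b.1 i) :=
              Equiv.tsum_eq (antiEquiv n) (fun b => ∏ i, Q ^ (b.1 i))
    _ = (∏ k ∈ Finset.range n, (1 - Q ^ (k + 1))⁻¹) ^ 2 := by rw [tsum_monoN]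

end Stmt13Aux

theorem stmt13 (μ : ℝ) (hμ : 0 < μ) (n : ℕ) (hn : 1 ≤ n)
    (x : ConfigZ n) (hx : IsClusteredZ x) :
    ∑' v : ConfigZ n, Real.exp (-μ * ell1Z x v)
      ≤ (1 - Real.exp (-μ))⁻¹ *
          (∏' k : ℕ, (1 - Real.exp (-((k : ℝ) + 1) * μ))⁻¹) ^ 2 := by
  set q := Real.exp (-μ) with hq
  have hq0 : 0 < q := Real.exp_pos _
  have hq1 : q < 1 := by
    rw [hq, show (1 : ℝ) = Real.exp 0 by simp]
    exact Real.exp_lt_exp.mpr (by linarith)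
  have hfk_pos : ∀ k : ℕ, 0 < 1 - q ^ (k + 1) := by
    intro k
    have : q ^ (k + 1) < 1 := pow_lt_one₀ hq0.le hq1 (Nat.succ_ne_zero k)
    linarith
  have hqk_le : ∀ k : ℕ, q ^ (k + 1) ≤ q := by
    intro k
    calc q ^ (k + 1) ≤ q ^ 1 := pow_le_pow_of_le_one hq0.le hq1.le (by omega)
      _ = q := pow_one q
  -- the exponential in the tprod is a power of q
  have hexp_eq : (fun k : ℕ => (1 - Real.exp (-((k : ℝ) + 1) * μ))⁻¹)
      = fun k : ℕ => (1 - q ^ (k + 1))⁻¹ := by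
    funext k
    congr 2
    rw [hq, ← Real.exp_nat_mul]
    congr 1
    push_cast
    ring
  -- log of the factors is summable
  set g : ℕ → ℝ := fun k => Real.log ((1 - q ^ (k + 1))⁻¹) with hg
  have hg0 : ∀ k, 0 ≤ g k := by
    intro k
    rw [hg]
    dsimp only
    rw [Real.log_inv]
    have h1 : 1 - q ^ (k + 1) ≤ 1 := by
      have := pow_pos hq0 (k + 1); linarith
    have := Real.log_nonpos (by linarith [hfk_pos k]) h1
    linarith
  have hg_le : ∀ k, g k ≤ q ^ k * (q * (1 - q)⁻¹) := by
    intro k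
    have hrpos := hfk_pos k
    have hinv : g k ≤ (1 - q ^ (k + 1))⁻¹ - 1 :=
      Real.log_le_sub_one_of_pos (inv_pos.mpr hrpos)
    have hident : (1 - q ^ (k + 1))⁻¹ - 1 = q ^ (k + 1) * (1 - q ^ (k + 1))⁻¹ := by
      field_simp
      ring
    have hmono : (1 - q ^ (k + 1))⁻¹ ≤ (1 - q)⁻¹ := by
      apply inv_anti₀ (by linarith)
      linarith [hqk_le k]
    have hstep : q ^ (k + 1) * (1 - q ^ (k + 1))⁻¹ ≤ q ^ (k + 1) * (1 - q)⁻¹ :=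
      mul_le_mul_of_nonneg_left hmono (pow_nonneg hq0.le _)
    calc g k ≤ q ^ (k + 1) * (1 - q ^ (k + 1))⁻¹ := by rw [← hident]; exact hinv
      _ ≤ q ^ (k + 1) * (1 - q)⁻¹ := hstep
      _ = q ^ k * (q * (1 - q)⁻¹) := by ring
  have hgsum : Summable g :=
    Summable.of_nonneg_of_le hg0 hg_le
      ((summable_geometric_of_lt_one hq0.le hq1).mul_right _)
  -- the infinite product equals exp of the sum of logs
  have hfk_eq : (Real.exp ∘ g) = fun k => (1 - q ^ (k + 1))⁻¹ := by
    funext k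
    exact Real.exp_log (inv_pos.mpr (hfk_pos k))
  have hhp : HasProd (fun k => (1 - q ^ (k + 1))⁻¹) (Real.exp (∑' k, g k)) := by
    rw [← hfk_eq]
    exact hgsum.hasSum.rexp
  set P : ℝ := ∏' k : ℕ, (1 - q ^ (k + 1))⁻¹ with hP
  have hPval : P = Real.exp (∑' k, g k) := hhp.tprod_eq
  -- finite products are below P
  set C : ℝ := ∏ k ∈ Finset.range n, (1 - q ^ (k + 1))⁻¹ with hC
  have hC_nonneg : 0 ≤ C :=
    Finset.prod_nonneg fun k _ => (inv_pos.mpr (hfk_pos k)).le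
  have hCP : C ≤ P := by
    have hCexp : C = Real.exp (∑ k ∈ Finset.range n, g k) := by
      rw [Real.exp_sum]
      exact Finset.prod_congr rfl fun k _ =>
        (Real.exp_log (inv_pos.mpr (hfk_pos k))).symm
    rw [hCexp, hPval]
    exact Real.exp_le_exp.mpr (Summable.sum_le_tsum (Finset.range n) (fun k _ => hg0 k) hgsum)
  -- transfer the ENNReal bound
  have hQfact : ∀ k : ℕ, (1 - (ENNReal.ofReal q) ^ (k + 1))⁻¹
      = ENNReal.ofReal ((1 - q ^ (k + 1))⁻¹) := by
    intro k
    rw [ENNReal.ofReal_inv_of_pos (hfk_pos k),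
      ENNReal.ofReal_sub 1 (pow_nonneg hq0.le _), ENNReal.ofReal_one,
      ENNReal.ofReal_pow hq0.le]
  have hEN : ∑' v : ConfigZ n, ENNReal.ofReal (Real.exp (-μ * ell1Z x v))
      ≤ ENNReal.ofReal (C ^ 2) := by
    refine le_trans (Stmt13Aux.ennreal_bound μ n x hx) (le_of_eq ?_)
    rw [ENNReal.ofReal_pow hC_nonneg, ← hq]
    congr 1
    rw [hC, ENNReal.ofReal_prod_of_nonneg fun k _ => (inv_pos.mpr (hfk_pos k)).le]
    exact Finset.prod_congr rfl fun k _ => hQfact k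
  have hne : (∑' v : ConfigZ n, ENNReal.ofReal (Real.exp (-μ * ell1Z x v))) ≠ ⊤ :=
    (lt_of_le_of_lt hEN ENNReal.ofReal_lt_top).ne
  have hsumf : Summable fun v : ConfigZ n => Real.exp (-μ * ell1Z x v) := by
    have := ENNReal.summable_toReal hne
    refine this.congr fun v => ?_
    exact ENNReal.toReal_ofReal (Real.exp_nonneg _)
  have hmain : (∑' v : ConfigZ n, Real.exp (-μ * ell1Z x v)) ≤ C ^ 2 := by
    have heq := ENNReal.ofReal_tsum_of_nonneg (fun v => Real.exp_nonneg _) hsumf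
    rw [← heq] at hEN
    exact (ENNReal.ofReal_le_ofReal_iff (by positivity)).mp hEN
  -- conclude
  rw [hexp_eq, ← hP]
  have hP2 : C ^ 2 ≤ P ^ 2 := by
    apply pow_le_pow_left₀ hC_nonneg hCP
  have hone : (1 : ℝ) ≤ (1 - q)⁻¹ := by
    rw [le_inv_comm₀ one_pos (by linarith)]
    simp
    linarith
  calc (∑' v : ConfigZ n, Real.exp (-μ * ell1Z x v)) ≤ C ^ 2 := hmain
    _ ≤ P ^ 2 := hP2
    _ ≤ (1 - q)⁻¹ * P ^ 2 := le_mul_of_one_le_left (by positivity) hone
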